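/- arXiv:0911.5642 — 6 statements merged into one kernel-verified Lean document; each statement's English description precedes it below -/
import Mathlib

section
/- Let b : ℝ → Set P be a behavior that is piecewise constant with transition points forming a set τ ⊆ ℝ such that any two distinct transition points are at least δ apart (δ > 0), and suppose a propositional formula π over P holds at time t under b. Then there exist reals c_p ≤ t ≤ c_n with c_n - c_p ≥ δ such that π holds at every t' ∈ (c_p, c_n). Moreover, if c_n - c_p = δ exactly, then π also holds at c_p and at c_n. -/
variable {P : Type*} {α : Type*}

/-- Propositional formulas: Boolean combinations (∧, ∨) of literals over alphabet `P`. -/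
inductive PropForm (P : Type*) where
  | pos : P → PropForm P
  | neg : P → PropForm P
  | conj : PropForm P → PropForm P → PropForm P
  | disj : PropForm P → PropForm P → PropForm P

/-- Truth of a propositional formula at a state (set of propositions). -/
def PropForm.eval : PropForm P → Set P → Prop
  | .pos p, s => p ∈ s
  | .neg p, s => p ∉ s
  | .conj a b, s => a.eval s ∧ b.eval s
  | .disj a b, s => a.eval s ∨ b.eval s

/-- `I` is a nonempty interval on which `b` is constant. -/
def IsConstancyInterval (b : ℝ → α) (I : Set ℝ) : Prop :=
  I.Nonempty ∧ I.OrdConnected ∧ ∀ s ∈ I, ∀ t ∈ I, b s = b t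

/-- `I` is a maximal constancy interval of `b`. -/
def IsMaximalConstancyInterval (b : ℝ → α) (I : Set ℝ) : Prop :=
  IsConstancyInterval b I ∧ ∀ J, IsConstancyInterval b J → I ⊆ J → J = I

/-- `b` is non-Berkeley for `δ`: it is piecewise constant (every instant lies in a maximal
constancy interval) and every maximal constancy interval contains a closed interval of
length `δ`. -/
def NonBerkeley (δ : ℝ) (b : ℝ → α) : Prop :=
  (∀ t : ℝ, ∃ I, IsMaximalConstancyInterval b I ∧ t ∈ I) ∧
  ∀ I, IsMaximalConstancyInterval b I → ∃ t, Set.Icc t (t + δ) ⊆ I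

/-- `x` is a transition (discontinuity) point of `b`: `b` is not locally constant at `x`. -/
def TransitionPoint (b : ℝ → α) (x : ℝ) : Prop :=
  ¬ ∃ ε > 0, ∀ y : ℝ, |y - x| < ε → b y = b x

/-- Lemma "changepoints": if `b` is piecewise constant with transition points `τ` that are
at least `δ` apart (non-Berkeley for `δ`), and a propositional formula `π` holds at `t`,
then there are `c_p ≤ t ≤ c_n` with `c_n - c_p ≥ δ` such that `π` holds on `(c_p, c_n)`;
and if `c_n - c_p = δ` exactly then `π` also holds at `c_p` and `c_n`. -/
theorem changepoints (b : ℝ → Set P) (τ : Set ℝ) (δ : ℝ) (hδ : 0 < δ)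
    (hsep : ∀ x ∈ τ, ∀ y ∈ τ, x ≠ y → δ ≤ |x - y|)
    (hpc : ∀ x y : ℝ, x ≤ y → Set.Icc x y ∩ τ = ∅ → b x = b y)
    (hnb : NonBerkeley δ b)
    (π : PropForm P) (t : ℝ) (ht : π.eval (b t)) :
    ∃ cp cn : ℝ, cp ≤ t ∧ t ≤ cn ∧ δ ≤ cn - cp ∧
      (∀ t' ∈ Set.Ioo cp cn, π.eval (b t')) ∧
      (cn - cp = δ → π.eval (b cp) ∧ π.eval (b cn)) := by
  obtain ⟨I, hI, htI⟩ := hnb.1 t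
  obtain ⟨s, hs⟩ := hnb.2 I hI
  obtain ⟨-, hoc, hconst⟩ := hI.1
  have hsI : s ∈ I := hs ⟨le_refl s, by linarith⟩
  have hsδI : s + δ ∈ I := hs ⟨by linarith, le_refl _⟩
  have hIcc : Set.Icc (min t s) (max t (s + δ)) ⊆ I := by
    rcases min_cases t s with ⟨h1, _⟩ | ⟨h1, _⟩ <;>
    rcases max_cases t (s + δ) with ⟨h2, _⟩ | ⟨h2, _⟩ <;>
    rw [h1, h2] <;> exact hoc.out (by assumption) (by assumption)
  have key : ∀ u ∈ Set.Icc (min t s) (max t (s + δ)), π.eval (b u) := by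
    intro u hu
    have : b u = b t := hconst _ (hIcc hu) _ htI
    rw [this]; exact ht
  have hle : min t s ≤ max t (s + δ) := le_trans (min_le_left _ _) (le_max_left _ _)
  refine ⟨min t s, max t (s + δ), min_le_left _ _, le_max_left _ _, by
    have := min_le_right t s; have := le_max_right t (s + δ); linarith,
    fun t' ht' => key _ (Set.Ioo_subset_Icc_self ht'),
    fun _ => ⟨key _ ⟨le_refl _, hle⟩, key _ ⟨hle, le_refl _⟩⟩⟩
end

section
/- Let δ > 0, z ∈ ℝ, and let b : ℝ → Set P be non-Berkeley for δ (piecewise constant, with each maximal constancy interval containing a closed subinterval of length δ). Let π₁, π₂ be propositional formulas and l ≤ u rationals with 0 ≤ l. If at the sampling instant t = z + kδ the dense-time formula U_{[l,u]}(π₁,π₂) holds (i.e., there is d ∈ [l,u] with π₂ true at t+d and π₁ true on [t, t+d)), then the discrete-time formula U_{[⌊l/δ⌋,⌈u/δ⌉]}(π₁,π₂) holds at k in the sampled behavior σ_{δ,z}[b] (i.e., there is an integer d' ∈ [⌊l/δ⌋,⌈u/δ⌉] with π₂ true at sample k+d' and π₁ true at all samples k+e' for integers 0 ≤ e' < d').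 -/
variable {P : Type*} {α : Type*}

/-- Key lemma: an ord-connected set containing a point `x` and a closed interval of
length `δ` contains `g₁` or `g₂` whenever `g₁ ≤ x ≤ g₂ = g₁ + δ`. -/
lemma grid_mem_of_ordConnected {I : Set ℝ} (hoc : I.OrdConnected) {δ x s g₁ g₂ : ℝ}
    (hδ : 0 ≤ δ) (hx : x ∈ I) (hs : Set.Icc s (s + δ) ⊆ I)
    (h1 : g₁ ≤ x) (h2 : x ≤ g₂) (h12 : g₂ = g₁ + δ) : g₁ ∈ I ∨ g₂ ∈ I := by
  have hsI : s ∈ I := hs ⟨le_refl s, by linarith⟩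
  have hsdI : s + δ ∈ I := hs ⟨by linarith, le_refl _⟩
  by_cases hg : s ≤ g₁
  · left
    by_cases hg' : g₁ ≤ s + δ
    · exact hs ⟨hg, hg'⟩
    · exact hoc.out hsdI hx ⟨le_of_not_ge hg', h1⟩
  · right
    have hlt : g₁ < s := lt_of_not_ge hg
    by_cases hg' : s ≤ g₂
    · exact hs ⟨hg', by linarith⟩
    · exact hoc.out hx hsI ⟨h2, le_of_not_ge hg'⟩

/-- Closure under sampling, `until` case: if the dense-time bounded until
`U_{[l,u]}(π₁, π₂)` holds at the sampling instant `t = z + kδ` of a behavior non-Berkeley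
for `δ`, then the discrete-time until `U_{[⌊l/δ⌋, ⌈u/δ⌉]}(π₁, π₂)` holds at `k` in the
sampled behavior. -/
theorem until_closed_under_sampling (δ z : ℝ) (hδ : 0 < δ) (b : ℝ → Set P)
    (hb : NonBerkeley δ b) (π₁ π₂ : PropForm P) (l u : ℚ) (hl : 0 ≤ l) (hlu : l ≤ u)
    (k : ℤ)
    (h : ∃ d : ℝ, (l : ℝ) ≤ d ∧ d ≤ (u : ℝ) ∧ π₂.eval (b (z + (k : ℝ) * δ + d)) ∧
      ∀ t' : ℝ, 0 ≤ t' → t' < d → π₁.eval (b (z + (k : ℝ) * δ + t'))) :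
    ∃ d' : ℤ, ⌊(l : ℝ) / δ⌋ ≤ d' ∧ d' ≤ ⌈(u : ℝ) / δ⌉ ∧
      π₂.eval (b (z + ((k + d' : ℤ) : ℝ) * δ)) ∧
      ∀ e' : ℤ, 0 ≤ e' → e' < d' → π₁.eval (b (z + ((k + e' : ℤ) : ℝ) * δ)) := by
  obtain ⟨d, hld, hdu, hπ2, hπ1⟩ := h
  have hd0 : (0 : ℝ) ≤ d := le_trans (by exact_mod_cast hl) hld
  set m : ℤ := ⌊d / δ⌋ with hm
  have hmd : (m : ℝ) * δ ≤ d := by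
    have h1 := Int.floor_le (d / δ)
    have h2 : (m : ℝ) * δ ≤ (d / δ) * δ := by nlinarith
    rwa [div_mul_cancel₀ d hδ.ne'] at h2
  have hdm1 : d < ((m : ℝ) + 1) * δ := by
    have h1 := Int.lt_floor_add_one (d / δ)
    have h2 : (d / δ) * δ < ((m : ℝ) + 1) * δ := by nlinarith
    rwa [div_mul_cancel₀ d hδ.ne'] at h2
  have hlm : ⌊(l : ℝ) / δ⌋ ≤ m := Int.floor_le_floor ((div_le_div_iff_of_pos_right hδ).2 hld)
  have hmu : ⌈d / δ⌉ ≤ ⌈(u : ℝ) / δ⌉ := Int.ceil_le_ceil ((div_le_div_iff_of_pos_right hδ).2 hdu)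
  -- the π₁ part: any sample strictly before d works
  have hπ1' : ∀ (d' : ℤ), ((d' : ℝ) - 1) * δ < d → ∀ e' : ℤ, 0 ≤ e' → e' < d' →
      π₁.eval (b (z + ((k + e' : ℤ) : ℝ) * δ)) := by
    intro d' hd' e' he0 hed
    have key : z + ((k + e' : ℤ) : ℝ) * δ = z + (k : ℝ) * δ + (e' : ℝ) * δ := by
      push_cast; ring
    rw [key]
    apply hπ1
    · positivity
    · have h1 : (e' : ℝ) + 1 ≤ (d' : ℝ) := by exact_mod_cast hed
      nlinarith
  by_cases heq : (m : ℝ) * δ = d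
  · -- the sample hits d exactly
    refine ⟨m, hlm, le_trans (Int.floor_le_ceil _) hmu, ?_, hπ1' m (by nlinarith)⟩
    have key : z + ((k + m : ℤ) : ℝ) * δ = z + (k : ℝ) * δ + d := by
      push_cast; rw [← heq]; ring
    rw [key]; exact hπ2
  · -- strictly between samples m and m+1
    have hmlt : (m : ℝ) * δ < d := lt_of_le_of_ne hmd heq
    have hm1u : m + 1 ≤ ⌈(u : ℝ) / δ⌉ := by
      refine le_trans ?_ hmu
      rw [← Int.lt_iff_add_one_le, Int.lt_ceil]
      exact (lt_div_iff₀ hδ).2 (by linarith)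
    set x : ℝ := z + (k : ℝ) * δ + d with hx
    obtain ⟨I, hI, hxI⟩ := hb.1 x
    obtain ⟨s, hs⟩ := hb.2 I hI
    have hoc := hI.1.2.1
    have hconst := hI.1.2.2
    have hgrid := grid_mem_of_ordConnected hoc hδ.le hxI hs
      (g₁ := z + (k : ℝ) * δ + (m : ℝ) * δ) (g₂ := z + (k : ℝ) * δ + ((m : ℝ) + 1) * δ)
      (by linarith) (by linarith) (by ring)
    rcases hgrid with hg | hg
    · refine ⟨m, hlm, le_trans (Int.floor_le_ceil _) hmu, ?_, hπ1' m (by nlinarith)⟩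
      have key : z + ((k + m : ℤ) : ℝ) * δ = z + (k : ℝ) * δ + (m : ℝ) * δ := by
        push_cast; ring
      rw [key, hconst _ hg _ hxI]; exact hπ2
    · refine ⟨m + 1, le_trans hlm (by omega), hm1u, ?_, hπ1' (m + 1) (by push_cast; nlinarith)⟩
      have key : z + ((k + (m + 1) : ℤ) : ℝ) * δ = z + (k : ℝ) * δ + ((m : ℝ) + 1) * δ := by
        push_cast; ring
      rw [key, hconst _ hg _ hxI]; exact hπ2
end

section
/- Let δ > 0, z ∈ ℝ, let d : ℤ → Set P be a discrete-time behavior, and let b : ℝ → Set P be non-Berkeley for δ with σ_{δ,z}[b] = d. Let π₁, π₂ be propositional formulas and l ≤ u integers with 0 ≤ l. If the discrete-time release R_{[l,u]}(π₁,π₂) holds at every integer k in d, then the dense-time release R_{[(l+1)δ,(u-1)δ]}(π₁,π₂) holds at every sampling instant t = z + kδ in b. In fact the stronger formula R_{[lδ,uδ]}(π₁,π₂) holds at every sampling instant. -/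
variable {P : Type*} {α : Type*}

lemma nb_sandwich {α : Type*} {δ : ℝ} (hδ : 0 < δ) {b : ℝ → α} (hb : NonBerkeley δ b)
    {t r : ℝ} (h1 : t ≤ r) (h2 : r ≤ t + δ) : b r = b t ∨ b r = b (t + δ) := by
  obtain ⟨I, hI, hrI⟩ := hb.1 r
  obtain ⟨a, ha⟩ := hb.2 I hI
  obtain ⟨⟨hne, hoc, hconst⟩, _⟩ := hI
  have haI : a ∈ I := ha ⟨le_refl a, by linarith⟩
  have haδI : a + δ ∈ I := ha ⟨by linarith, le_refl _⟩
  rcases le_or_gt a t with hat | hat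
  · have htI : t ∈ I := hoc.out haI hrI ⟨hat, h1⟩
    exact Or.inl (hconst r hrI t htI)
  · have htI : t + δ ∈ I := hoc.out hrI haδI ⟨h2, by linarith⟩
    exact Or.inr (hconst r hrI (t + δ) htI)

/-- Closure under inverse sampling, `release` case: if the discrete-time release
`R_{[l,u]}(π₁, π₂)` holds at every integer in `d = σ_{δ,z}[b]` and `b` is non-Berkeley
for `δ`, then the dense-time release `R_{[(l+1)δ,(u-1)δ]}(π₁, π₂)` — and in fact the
stronger `R_{[lδ,uδ]}(π₁, π₂)` — holds at every sampling instant `z + kδ`. -/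
theorem release_closed_under_inverse_sampling (δ z : ℝ) (hδ : 0 < δ)
    (d : ℤ → Set P) (b : ℝ → Set P) (hb : NonBerkeley δ b)
    (hsamp : ∀ k : ℤ, d k = b (z + (k : ℝ) * δ))
    (π₁ π₂ : PropForm P) (l u : ℤ) (hl : 0 ≤ l) (hlu : l ≤ u)
    (h : ∀ k j : ℤ, l ≤ j → j ≤ u →
      π₂.eval (d (k + j)) ∨ ∃ e : ℤ, 0 ≤ e ∧ e < j ∧ π₁.eval (d (k + e))) :
    ∀ k : ℤ,
      (∀ x : ℝ, (l : ℝ) * δ ≤ x → x ≤ (u : ℝ) * δ →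
        π₂.eval (b (z + (k : ℝ) * δ + x)) ∨
          ∃ y : ℝ, 0 ≤ y ∧ y < x ∧ π₁.eval (b (z + (k : ℝ) * δ + y))) ∧
      (∀ x : ℝ, ((l : ℝ) + 1) * δ ≤ x → x ≤ ((u : ℝ) - 1) * δ →
        π₂.eval (b (z + (k : ℝ) * δ + x)) ∨
          ∃ y : ℝ, 0 ≤ y ∧ y < x ∧ π₁.eval (b (z + (k : ℝ) * δ + y))) := by
  intro k
  have key : ∀ x : ℝ, (l : ℝ) * δ ≤ x → x ≤ (u : ℝ) * δ →
      π₂.eval (b (z + (k : ℝ) * δ + x)) ∨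
        ∃ y : ℝ, 0 ≤ y ∧ y < x ∧ π₁.eval (b (z + (k : ℝ) * δ + y)) := by
    intro x hlx hxu
    set j : ℤ := ⌊x / δ⌋ with hj
    have hjx : (j : ℝ) * δ ≤ x := by
      have := Int.floor_le (x / δ)
      calc (j : ℝ) * δ ≤ (x / δ) * δ := by nlinarith
        _ = x := div_mul_cancel₀ x hδ.ne'
    have hxj1 : x < ((j : ℝ) + 1) * δ := by
      have := Int.lt_floor_add_one (x / δ)
      calc x = (x / δ) * δ := (div_mul_cancel₀ x hδ.ne').symm
        _ < ((j : ℝ) + 1) * δ := by nlinarith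
    have hlj : l ≤ j := by
      apply Int.le_floor.mpr
      rw [le_div_iff₀ hδ]; exact hlx
    have hju : j ≤ u := by
      have : (j : ℝ) * δ ≤ (u : ℝ) * δ := le_trans hjx hxu
      exact_mod_cast le_of_mul_le_mul_right this hδ
    -- helper: turning a discrete witness e < m into a dense witness
    have wit : ∀ e : ℤ, 0 ≤ e → (e : ℝ) * δ < x → π₁.eval (d (k + e)) →
        ∃ y : ℝ, 0 ≤ y ∧ y < x ∧ π₁.eval (b (z + (k : ℝ) * δ + y)) := by
      intro e he hex hπ
      refine ⟨(e : ℝ) * δ, by positivity, hex, ?_⟩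
      have : z + (k : ℝ) * δ + (e : ℝ) * δ = z + ((k + e : ℤ) : ℝ) * δ := by
        push_cast; ring
      rw [this, ← hsamp]; exact hπ
    rcases h k j hlj hju with hπ2 | ⟨e, he0, hej, hπ1⟩
    · -- π₂ at sampling instant j
      have hbj : π₂.eval (b (z + ((k + j : ℤ) : ℝ) * δ)) := by rw [← hsamp]; exact hπ2
      rcases eq_or_lt_of_le hjx with heq | hlt
      · left
        have : z + (k : ℝ) * δ + x = z + ((k + j : ℤ) : ℝ) * δ := by
          rw [← heq]; push_cast; ring
        rw [this]; exact hbj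
      · -- j*δ < x, so j < u and we can use j+1
        have hju' : j + 1 ≤ u := by
          have : (j : ℝ) * δ < (u : ℝ) * δ := lt_of_lt_of_le hlt hxu
          have : j < u := by exact_mod_cast lt_of_mul_lt_mul_right this hδ.le
          omega
        rcases h k (j + 1) (by omega) hju' with hπ2' | ⟨e, he0, hej, hπ1⟩
        · -- π₂ at both j and j+1; use non-Berkeleyness
          have hbj1 : π₂.eval (b (z + ((k + (j + 1) : ℤ) : ℝ) * δ)) := by
            rw [← hsamp]; exact hπ2'
          have hsand := nb_sandwich hδ hb (t := z + ((k + j : ℤ) : ℝ) * δ)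
            (r := z + (k : ℝ) * δ + x)
            (by push_cast; linarith) (by push_cast; linarith)
          left
          rcases hsand with hs | hs
          · rw [hs]; exact hbj
          · rw [hs]
            have : z + ((k + j : ℤ) : ℝ) * δ + δ = z + ((k + (j + 1) : ℤ) : ℝ) * δ := by
              push_cast; ring
            rw [this]; exact hbj1
        · right
          apply wit e he0 _ hπ1
          have : e ≤ j := by omega
          have : (e : ℝ) * δ ≤ (j : ℝ) * δ := by
            apply mul_le_mul_of_nonneg_right _ hδ.le; exact_mod_cast this
          linarith
    · right
      apply wit e he0 _ hπ1
      have he1 : e + 1 ≤ j := by omega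
      have : ((e : ℝ) + 1) * δ ≤ (j : ℝ) * δ := by
        apply mul_le_mul_of_nonneg_right _ hδ.le; exact_mod_cast he1
      nlinarith
  exact ⟨key, fun x h1 h2 => key x (by nlinarith) (by nlinarith)⟩
end

section
/- Let b : ℝ → Set P be a non-Berkeley behavior for δ and suppose proposition p ∈ P holds at two sampling instants t and t + δ (i.e., p ∈ b(t) and p ∈ b(t+δ)). Then p holds throughout the closed interval [t, t+δ]. -/
variable {P : Type*} {α : Type*}

/-- If `b` is non-Berkeley for `δ` and proposition `p` holds at both `t` and `t + δ`,
then `p` holds throughout `[t, t + δ]`. -/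
theorem holds_between_samples (δ : ℝ) (hδ : 0 < δ) (b : ℝ → Set P)
    (hb : NonBerkeley δ b) (p : P) (t : ℝ) (h1 : p ∈ b t) (h2 : p ∈ b (t + δ)) :
    ∀ s ∈ Set.Icc t (t + δ), p ∈ b s := by
  intro s hs
  obtain ⟨I, hI, hsI⟩ := hb.1 s
  obtain ⟨⟨hne, hord, hconst⟩, hmax⟩ := hI
  obtain ⟨u, hu⟩ := hb.2 I ⟨⟨hne, hord, hconst⟩, hmax⟩
  have huI : u ∈ I := hu ⟨le_refl u, by linarith⟩
  have hu2 : u + δ ∈ I := hu ⟨by linarith, le_refl _⟩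
  have haI : min u s ∈ I := by
    rcases min_cases u s with ⟨h, _⟩ | ⟨h, _⟩ <;> rw [h] <;> assumption
  have hcI : max (u + δ) s ∈ I := by
    rcases max_cases (u + δ) s with ⟨h, _⟩ | ⟨h, _⟩ <;> rw [h] <;> assumption
  have hsub : Set.Icc (min u s) (max (u + δ) s) ⊆ I := hord.out haI hcI
  have hmu : min u s ≤ u := min_le_left _ _
  have hms : min u s ≤ s := min_le_right _ _
  have hMu : u + δ ≤ max (u + δ) s := le_max_left _ _
  have hMs : s ≤ max (u + δ) s := le_max_right _ _
  by_cases hat : min u s ≤ t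
  · have htI : t ∈ I := hsub ⟨hat, le_trans hs.1 hMs⟩
    have := hconst s hsI t htI
    rw [this]; exact h1
  · have htI : t + δ ∈ I := hsub ⟨by linarith [hs.2], by linarith⟩
    have := hconst s hsI (t + δ) htI
    rw [this]; exact h2
end

section
/- Define qualitative (LTL) formulas over alphabet P by the grammar φ ::= p | ¬φ | φ₁ ∧ φ₂ | U(φ₁, φ₂), interpreted over behaviors b : ℝ → Set P with non-strict unbounded until: U(φ₁,φ₂) holds at t iff ∃d ≥ 0 with φ₂ at t+d and φ₁ throughout [t, t+d). Then for any LTL formula φ and any behavior b non-Berkeley for δ, the set of discontinuity points of the truth-value function t ↦ [φ holds at t under b] is a subset of the set of discontinuity points of b; consequently the Boolean-valued function t ↦ [φ holds at t] is itself non-Berkeley for δ. -/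
variable {P : Type*} {α : Type*}

/-- Qualitative (LTL) formulas: atoms, negation, conjunction, and non-strict unbounded
until. -/
inductive LTL (P : Type*) where
  | atom : P → LTL P
  | not : LTL P → LTL P
  | and : LTL P → LTL P → LTL P
  | untl : LTL P → LTL P → LTL P

/-- Dense-time satisfaction of an LTL formula at instant `t` of behavior `b`. -/
def LTL.sat : LTL P → (ℝ → Set P) → ℝ → Prop
  | .atom p, b, t => p ∈ b t
  | .not φ, b, t => ¬ φ.sat b t
  | .and φ ψ, b, t => φ.sat b t ∧ ψ.sat b t
  | .untl φ ψ, b, t => ∃ d : ℝ, t ≤ d ∧ ψ.sat b d ∧ ∀ u : ℝ, t ≤ u → u < d → φ.sat b u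

/-- Union of two ord-connected sets sharing a point is ord-connected. -/
lemma ordConnected_union_of_mem {I J : Set ℝ} (hI : I.OrdConnected) (hJ : J.OrdConnected)
    {t : ℝ} (htI : t ∈ I) (htJ : t ∈ J) : (I ∪ J).OrdConnected := by
  constructor
  rintro x (hx | hx) y (hy | hy) z hz
  · exact Or.inl (hI.out hx hy hz)
  · rcases le_total z t with h | h
    · exact Or.inl (hI.out hx htI ⟨hz.1, h⟩)
    · exact Or.inr (hJ.out htJ hy ⟨h, hz.2⟩)
  · rcases le_total z t with h | h
    · exact Or.inr (hJ.out hx htJ ⟨hz.1, h⟩)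
    · exact Or.inl (hI.out htI hy ⟨h, hz.2⟩)
  · exact Or.inr (hJ.out hx hy hz)

/-- Every point lies in a maximal constancy interval (for any function). -/
lemma exists_maximalConstancyInterval (f : ℝ → α) (t : ℝ) :
    ∃ I, IsMaximalConstancyInterval f I ∧ t ∈ I := by
  set U : Set ℝ := ⋃₀ {K | IsConstancyInterval f K ∧ t ∈ K} with hU
  have hsingle : IsConstancyInterval f {t} := by
    refine ⟨Set.singleton_nonempty t, Set.ordConnected_singleton, ?_⟩
    intro s hs u hu
    rw [Set.mem_singleton_iff] at hs hu
    rw [hs, hu]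
  have htU : t ∈ U := Set.mem_sUnion.mpr ⟨{t}, ⟨hsingle, rfl⟩, rfl⟩
  have hconst : ∀ s ∈ U, f s = f t := by
    rintro s ⟨K, ⟨⟨_, _, hK⟩, htK⟩, hsK⟩
    exact hK s hsK t htK
  have hCI : IsConstancyInterval f U := by
    refine ⟨⟨t, htU⟩, ?_, fun s hs u hu => (hconst s hs).trans (hconst u hu).symm⟩
    constructor
    rintro x ⟨K₁, ⟨hK₁, htK₁⟩, hxK₁⟩ y ⟨K₂, ⟨hK₂, htK₂⟩, hyK₂⟩ z hz
    rcases le_total z t with h | h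
    · exact ⟨K₁, ⟨hK₁, htK₁⟩, hK₁.2.1.out hxK₁ htK₁ ⟨hz.1, h⟩⟩
    · exact ⟨K₂, ⟨hK₂, htK₂⟩, hK₂.2.1.out htK₂ hyK₂ ⟨h, hz.2⟩⟩
  refine ⟨U, ⟨hCI, fun J hJ hUJ => ?_⟩, htU⟩
  exact Set.Subset.antisymm (Set.subset_sUnion_of_mem ⟨hJ, hUJ htU⟩) hUJ

/-- On any ord-connected set where the behavior is constant, LTL truth is constant. -/
lemma sat_const (b : ℝ → Set P) (I : Set ℝ) (hI : I.OrdConnected)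
    (hb : ∀ s ∈ I, ∀ u ∈ I, b s = b u) (φ : LTL P) :
    ∀ t ∈ I, ∀ t' ∈ I, φ.sat b t → φ.sat b t' := by
  induction φ with
  | atom p =>
    intro t ht t' ht' h
    show p ∈ b t'
    rw [hb t' ht' t ht]; exact h
  | not φ ih =>
    intro t ht t' ht' h hc
    exact h (ih t' ht' t ht hc)
  | and φ ψ ihφ ihψ =>
    intro t ht t' ht' h
    exact ⟨ihφ t ht t' ht' h.1, ihψ t ht t' ht' h.2⟩
  | untl φ ψ ihφ ihψ =>
    intro t ht t' ht' h
    obtain ⟨d, htd, hψ, hφ⟩ := h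
    by_cases hdI : d ∈ I
    · exact ⟨t', le_rfl, ihψ d hdI t' ht' hψ,
        fun u hu hu' => absurd hu' (not_lt.2 hu)⟩
    · have hlt : ∀ e ∈ I, e < d := fun e he =>
        lt_of_not_ge fun h' => hdI (hI.out ht he ⟨htd, h'⟩)
      have hφt : φ.sat b t := hφ t le_rfl (hlt t ht)
      refine ⟨d, (hlt t' ht').le, hψ, fun u hu hud => ?_⟩
      by_cases huI : u ∈ I
      · exact ihφ t ht u huI hφt
      · have htu : t ≤ u := le_of_not_gt fun h' => huI (hI.out ht' ht ⟨hu, h'.le⟩)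
        exact hφ u htu hud

/-- LTL formulas are shiftable: for `b` non-Berkeley for `δ`, the discontinuity points of
the truth-value function of any LTL formula are among the discontinuity points of `b`,
and hence the truth-value function is itself non-Berkeley for `δ`. -/
theorem ltl_shiftable (δ : ℝ) (hδ : 0 < δ) (b : ℝ → Set P)
    (hb : NonBerkeley δ b) (φ : LTL P) :
    (∀ x : ℝ, TransitionPoint (fun t => φ.sat b t) x → TransitionPoint b x) ∧
    NonBerkeley δ (fun t => φ.sat b t) := by
  set f : ℝ → Prop := fun t => φ.sat b t with hf
  -- any constancy interval of b is a constancy interval of f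
  have key : ∀ I : Set ℝ, IsConstancyInterval b I → IsConstancyInterval f I := by
    rintro I ⟨hne, hord, hconst⟩
    refine ⟨hne, hord, fun s hs u hu => ?_⟩
    exact eq_iff_iff.mpr ⟨sat_const b I hord hconst φ s hs u hu,
      sat_const b I hord hconst φ u hu s hs⟩
  constructor
  · intro x hx
    by_contra hbx
    simp only [TransitionPoint, not_not] at hbx
    obtain ⟨ε, hε, hconst⟩ := hbx
    set I : Set ℝ := {y | |y - x| < ε} with hI
    have hxI : x ∈ I := by simp [hI, hε]
    have hord : I.OrdConnected := by
      constructor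
      intro p hp q hq z hz
      rw [hI, Set.mem_setOf_eq, abs_lt] at *
      constructor <;> [linarith [hp.1, hz.1]; linarith [hq.2, hz.2]]
    have hbc : ∀ s ∈ I, ∀ u ∈ I, b s = b u := fun s hs u hu =>
      (hconst s hs).trans (hconst u hu).symm
    apply hx
    refine ⟨ε, hε, fun y hy => ?_⟩
    have hyI : y ∈ I := hy
    exact eq_iff_iff.mpr ⟨sat_const b I hord hbc φ y hyI x hxI,
      sat_const b I hord hbc φ x hxI y hyI⟩
  · constructor
    · intro t
      exact exists_maximalConstancyInterval f t
    · intro J hJ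
      obtain ⟨⟨⟨t, htJ⟩, hJord, hJconst⟩, hJmax⟩ := hJ
      obtain ⟨I, hImax, htI⟩ := hb.1 t
      have hIf : IsConstancyInterval f I := key I hImax.1
      have hunion : IsConstancyInterval f (I ∪ J) := by
        refine ⟨⟨t, Or.inl htI⟩,
          ordConnected_union_of_mem hIf.2.1 hJord htI htJ, ?_⟩
        have hval : ∀ s ∈ I ∪ J, f s = f t := by
          rintro s (hs | hs)
          · exact hIf.2.2 s hs t htI
          · exact hJconst s hs t htJ
        exact fun s hs u hu => (hval s hs).trans (hval u hu).symm
      have hIJ : I ∪ J = J := hJmax (I ∪ J) hunion Set.subset_union_right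
      obtain ⟨s, hs⟩ := hb.2 I hImax
      exact ⟨s, hs.trans (hIJ ▸ Set.subset_union_left)⟩
end

section
/- Let δ > 0, let l ≤ u be integers with 0 ≤ l, and consider the matching until over discrete time: U^m_{[l,u]}(π₁,π₂) at k iff ∃d ∈ [l,u] with both π₁ and π₂ at k+d and π₁ at all k+e, e ∈ [0,d). Suppose d : ℤ → Set P satisfies U^m_{[l,u]}(π₁,π₂) at k and b : ℝ → Set P is non-Berkeley for δ with σ_{δ,z}[b] = d. Then the dense-time matching until U^m_{[lδ,uδ]}(π₁,π₂) holds at t = z + kδ in b: ∃d' ∈ [lδ, uδ] with both π₁ and π₂ at t+d' and π₁ throughout [t, t+d'). -/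
variable {P : Type*} {α : Type*}

/-- Closure under inverse sampling for the matching until (part (1)): if the discrete
matching until `U^m_{[l,u]}(π₁,π₂)` holds at `k` in `d = σ_{δ,z}[b]` and `b` is
non-Berkeley for `δ`, then the dense-time matching until `U^m_{[lδ,uδ]}(π₁,π₂)` holds
at `t = z + kδ` in `b`. -/
theorem matching_until_inverse_sampling (δ z : ℝ) (hδ : 0 < δ)
    (l u : ℤ) (hl : 0 ≤ l) (hlu : l ≤ u)
    (d : ℤ → Set P) (b : ℝ → Set P) (hb : NonBerkeley δ b)
    (hsamp : ∀ k : ℤ, d k = b (z + (k : ℝ) * δ))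
    (π₁ π₂ : PropForm P) (k : ℤ)
    (h : ∃ j : ℤ, l ≤ j ∧ j ≤ u ∧ π₁.eval (d (k + j)) ∧ π₂.eval (d (k + j)) ∧
      ∀ e : ℤ, 0 ≤ e → e < j → π₁.eval (d (k + e))) :
    ∃ d' : ℝ, (l : ℝ) * δ ≤ d' ∧ d' ≤ (u : ℝ) * δ ∧
      π₁.eval (b (z + (k : ℝ) * δ + d')) ∧ π₂.eval (b (z + (k : ℝ) * δ + d')) ∧
      ∀ y : ℝ, 0 ≤ y → y < d' → π₁.eval (b (z + (k : ℝ) * δ + y)) := by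
  obtain ⟨j, hlj, hju, h1, h2, hall⟩ := h
  have hkey : z + (k : ℝ) * δ + (j : ℝ) * δ = z + ((k + j : ℤ) : ℝ) * δ := by
    push_cast; ring
  refine ⟨(j : ℝ) * δ,
    mul_le_mul_of_nonneg_right (by exact_mod_cast hlj) hδ.le,
    mul_le_mul_of_nonneg_right (by exact_mod_cast hju) hδ.le, ?_, ?_, ?_⟩
  · rw [hkey, ← hsamp]; exact h1
  · rw [hkey, ← hsamp]; exact h2
  · intro y hy0 hyj
    obtain ⟨I, hI, hxI⟩ := hb.1 (z + (k : ℝ) * δ + y)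
    obtain ⟨a, ha⟩ := hb.2 I hI
    obtain ⟨⟨hne, hconn, hconst⟩, hmax⟩ := hI
    set m : ℤ := ⌈(a - z) / δ⌉ with hm
    have hg1 : a ≤ z + (m : ℝ) * δ := by
      have h' := Int.le_ceil ((a - z) / δ)
      rw [div_le_iff₀ hδ] at h'
      linarith
    have hg2 : z + (m : ℝ) * δ ≤ a + δ := by
      have h' := Int.ceil_lt_add_one ((a - z) / δ)
      have h'' : ((m : ℝ) - 1) * δ < a - z :=
        (lt_div_iff₀ hδ).mp (by rw [hm]; linarith)
      nlinarith
    have hgI : z + (m : ℝ) * δ ∈ I := ha ⟨hg1, hg2⟩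
    set n : ℤ := max k (min m (k + j)) with hn
    have hkn : k ≤ n := le_max_left _ _
    have hnkj : n ≤ k + j := by
      have hj0 : (0 : ℝ) < (j : ℝ) * δ := lt_of_le_of_lt hy0 hyj
      have hj0' : 0 < j := by
        by_contra hc; push_neg at hc
        have : (j : ℝ) ≤ 0 := by exact_mod_cast hc
        nlinarith
      exact max_le (by omega) (min_le_right _ _)
    have hyjd : z + (k : ℝ) * δ + y < z + ((k + j : ℤ) : ℝ) * δ := by
      push_cast; linarith
    have hnI : z + (n : ℝ) * δ ∈ I := by
      rcases le_or_gt k m with hkm | hmk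
      · rcases le_or_gt m (k + j) with hmkj | hkjm
        · have hnm : n = m := by omega
          rw [hnm]; exact hgI
        · have hnm : n = k + j := by omega
          rw [hnm]
          refine hconn.out hxI hgI ⟨le_of_lt hyjd, ?_⟩
          have : ((k + j : ℤ) : ℝ) ≤ (m : ℝ) := by exact_mod_cast le_of_lt hkjm
          nlinarith
      · have hnm : n = k := by omega
        rw [hnm]
        refine hconn.out hgI hxI ⟨?_, by linarith⟩
        have : (m : ℝ) ≤ (k : ℝ) := by exact_mod_cast le_of_lt hmk
        nlinarith
    have hbx : b (z + (k : ℝ) * δ + y) = b (z + (n : ℝ) * δ) :=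
      hconst _ hxI _ hnI
    rw [hbx, ← hsamp n]
    rcases eq_or_lt_of_le hnkj with heq | hlt
    · rw [heq]; exact h1
    · have h' := hall (n - k) (by omega) (by omega)
      have : k + (n - k) = n := by ring
      rwa [this] at h'
end
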